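/- In a unital Banach algebra A, if L is a closed subspace invariant under conjugation by every invertible element, then L is a Lie ideal: xa - ax ∈ L for all x ∈ L and a ∈ A. -/

import Mathlib

open NormedSpace

/-- Topping: In a unital Banach algebra `A`, if `L` is a closed subspace
invariant under conjugation by every invertible element, then `L` is a Lie ideal:
`x * a - a * x ∈ L` for all `x ∈ L`, `a ∈ A`. -/
theorem lieIdeal_of_similarity_invariant
    {A : Type*} [NormedRing A] [NormedAlgebra ℂ A] [CompleteSpace A]
    (L : Submodule ℂ A) (hclosed : IsClosed (L : Set A))
    (hconj : ∀ t : Aˣ, ∀ x ∈ L, (↑t⁻¹ : A) * x * (t : A) ∈ L) :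
    ∀ x ∈ L, ∀ a : A, x * a - a * x ∈ L := by
  intro x hx a
  letI : NormedAlgebra ℚ A := NormedAlgebra.restrictScalars ℚ ℂ A
  -- f s = exp(s • (-a)) * x * exp(s • a)
  set f : ℂ → A := fun s => exp (s • (-a)) * x * exp (s • a) with hf
  have hmem : ∀ s : ℂ, f s ∈ L := by
    intro s
    have hu : IsUnit (exp (s • a)) := isUnit_exp _
    have := hconj hu.unit x hx
    have hinv : (↑hu.unit⁻¹ : A) = exp (s • (-a)) := by
      rw [← Ring.inverse_unit hu.unit, IsUnit.unit_spec, Ring.inverse_exp, smul_neg]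
    rwa [hinv, IsUnit.unit_spec] at this
  -- derivative of f at 0 is x * a - a * x
  have hd : HasDerivAt f (x * a - a * x) 0 := by
    have h1 : HasDerivAt (fun s : ℂ => exp (s • (-a))) (-a) 0 := by
      simpa using hasDerivAt_exp_smul_const (𝕂 := ℂ) (-a) 0
    have h2 : HasDerivAt (fun s : ℂ => exp (s • a)) a 0 := by
      simpa using hasDerivAt_exp_smul_const (𝕂 := ℂ) a 0
    have := ((h1.mul_const x).mul h2)
    simpa [hf, Pi.mul_def, smul_neg, mul_sub, sub_eq_add_neg, add_comm, neg_mul] using this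
  have hslope : Filter.Tendsto (fun s : ℂ => s⁻¹ • (f s - f 0)) (nhdsWithin 0 {0}ᶜ)
      (nhds (x * a - a * x)) := by
    have := hasDerivAt_iff_tendsto_slope.mp hd
    simpa [slope_fun_def, vsub_eq_sub, sub_zero] using this
  refine hclosed.mem_of_tendsto hslope ?_
  filter_upwards [self_mem_nhdsWithin] with s _
  exact L.smul_mem _ (L.sub_mem (hmem s) (by simpa [hf] using hmem 0))
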